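/- The set of 17 rules for a single locomotive turning around a single cell, clockwise and counter-clockwise (Table 6 of the paper, rules 62–78), is rotation-consistent. The rules are: (R,BWBWWWWBWB,W), (B,RBWWWWWWWW,B), (W,BWBWWWRBWB,W), (W,WRBWBBBWWW,W), (W,BWBWWWWBWB,W), (W,BWBWWRWBWB,W), (W,BRBWWWWBWB,W), (R,WWBWBBBWWW,W), (W,BWBWRWWBWB,R), (R,BWWBWWWBWB,W), (W,RWBWBWBBWW,W), (W,BWWBWWRBWB,W), (W,BWWBWWWBWB,W), (W,BWWBWRWBWB,W), (W,BWWBRWWBWB,W), (W,BRWBWWWBWB,R), (R,WWBWBWBBWW,W). -/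
import Mathlib


/-- The three states of the cellular automaton: W (white, quiescent),
B (blue) and R (red). -/
inductive CAState : Type
  | W | B | R
  deriving DecidableEq, Repr

open CAState

/-- A neighbourhood: a word of length 10 over {W,B,R}; positions 0-4
(paper's 1-5) are the side-neighbours, positions 5-9 (paper's 6-10)
the vertex-neighbours. -/
abbrev Nbhd := Fin 10 → CAState

/-- Build a neighbourhood from its ten letters. -/
def nb (a b c d e f g h i j : CAState) : Nbhd := ![a, b, c, d, e, f, g, h, i, j]

/-- The rotation ρ: simultaneous cyclic shift of the side part and of the
vertex part: ρ(x1…x10) = x2x3x4x5x1x7x8x9x10x6. -/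
def rho (n : Nbhd) : Nbhd := fun i => n (![1, 2, 3, 4, 0, 6, 7, 8, 9, 5] i)

/-- Two neighbourhoods are rotation-equivalent if one is ρ^k of the other. -/
def RotEquiv (n m : Nbhd) : Prop := ∃ k : ℕ, n = rho^[k] m

/-- A rule: (current state, neighbourhood, new state). -/
abbrev Rule := CAState × Nbhd × CAState

/-- A set of rules is rotation-consistent if any two rules with the same
current state and rotation-equivalent neighbourhoods have the same new
state. -/
def RotationConsistent (L : List Rule) : Prop :=
  ∀ r₁ ∈ L, ∀ r₂ ∈ L, r₁.1 = r₂.1 → RotEquiv r₁.2.1 r₂.2.1 → r₁.2.2 = r₂.2.2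

lemma rho_five (n : Nbhd) : rho^[5] n = n := by
  funext i
  fin_cases i <;> rfl

lemma rho_mul_five (q : ℕ) (n : Nbhd) : rho^[q * 5] n = n := by
  induction q with
  | zero => rfl
  | succ q ih => rw [Nat.succ_mul, Function.iterate_add_apply, rho_five, ih]

lemma rho_iterate_mod (k : ℕ) (n : Nbhd) : rho^[k] n = rho^[k % 5] n := by
  conv_lhs => rw [← Nat.div_add_mod k 5, Nat.mul_comm]
  rw [Nat.add_comm, Function.iterate_add_apply, rho_mul_five]

lemma rotEquiv_iff (n m : Nbhd) : RotEquiv n m ↔ ∃ k < 5, n = rho^[k] m := by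
  constructor
  · rintro ⟨k, rfl⟩
    exact ⟨k % 5, Nat.mod_lt _ (by norm_num), rho_iterate_mod k m⟩
  · rintro ⟨k, _, rfl⟩
    exact ⟨k, rfl⟩

instance (n m : Nbhd) : Decidable (RotEquiv n m) :=
  decidable_of_iff _ (rotEquiv_iff n m).symm

theorem single_loco_one_cell_rules_rotation_consistent :
    RotationConsistent [
    (R, nb B W B W W W W B W B, W),
    (B, nb R B W W W W W W W W, B),
    (W, nb B W B W W W R B W B, W),
    (W, nb W R B W B B B W W W, W),
    (W, nb B W B W W W W B W B, W),
    (W, nb B W B W W R W B W B, W),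
    (W, nb B R B W W W W B W B, W),
    (R, nb W W B W B B B W W W, W),
    (W, nb B W B W R W W B W B, R),
    (R, nb B W W B W W W B W B, W),
    (W, nb R W B W B W B B W W, W),
    (W, nb B W W B W W R B W B, W),
    (W, nb B W W B W W W B W B, W),
    (W, nb B W W B W R W B W B, W),
    (W, nb B W W B R W W B W B, W),
    (W, nb B R W B W W W B W B, R),
    (R, nb W W B W B W B B W W, W)] := by
  unfold RotationConsistent
  decide
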